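/- Let f be a real-valued function on [-1,1], let p be a real polynomial of degree at most d, and let δ > 0. Suppose the error function ε := f - p assumes alternately positive and negative signs at d+2 increasing points -1 ≤ x_0 < x_1 < ... < x_{d+1} ≤ 1 (i.e., for each i, ε(x_i) and ε(x_{i+1}) have opposite signs) and satisfies |ε(x_i)| ≥ δ for all i = 0,...,d+1. Then for every real polynomial q of degree at most d, sup_{x ∈ [-1,1]} |f(x) - q(x)| ≥ δ. -/

import Mathlib

/-- de la Vallée-Poussin: if the error `f - p` alternates in sign at `d+2` points of `[-1,1]`
with magnitude at least `δ` at each, then no polynomial of degree at most `d` approximates `f`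
on `[-1,1]` better than `δ`. -/
theorem de_la_vallee_poussin (f : ℝ → ℝ) (d : ℕ) (p : Polynomial ℝ)
    (hp : p.natDegree ≤ d) (δ : ℝ) (hδ : 0 < δ) (x : Fin (d + 2) → ℝ)
    (hx0 : -1 ≤ x 0) (hxlast : x (Fin.last (d + 1)) ≤ 1)
    (hmono : StrictMono x)
    (halt : ∀ i : Fin (d + 1),
      (f (x i.castSucc) - p.eval (x i.castSucc)) * (f (x i.succ) - p.eval (x i.succ)) < 0)
    (hbig : ∀ i : Fin (d + 2), δ ≤ |f (x i) - p.eval (x i)|)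
    (q : Polynomial ℝ) (hq : q.natDegree ≤ d) :
    ∃ y ∈ Set.Icc (-1 : ℝ) 1, δ ≤ |f y - q.eval y| := by
  by_contra hcon
  push_neg at hcon
  have hxmem : ∀ i : Fin (d+2), x i ∈ Set.Icc (-1:ℝ) 1 := fun i =>
    ⟨le_trans hx0 (hmono.monotone (Fin.zero_le i)),
     le_trans (hmono.monotone (Fin.le_last i)) hxlast⟩
  set r := q - p with hr
  have hsign : ∀ i : Fin (d+2), 0 < (f (x i) - p.eval (x i)) * r.eval (x i) := by
    intro i
    have h1 := hbig i
    have h2 := hcon (x i) (hxmem i)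
    have h3 : r.eval (x i) = (f (x i) - p.eval (x i)) - (f (x i) - q.eval (x i)) := by
      simp [hr]
    rw [h3]
    set e := f (x i) - p.eval (x i)
    set g := f (x i) - q.eval (x i)
    nlinarith [le_abs_self (e*g), abs_mul e g, sq_abs e, abs_nonneg g, abs_nonneg e]
  have hralt : ∀ i : Fin (d+1), r.eval (x i.castSucc) * r.eval (x i.succ) < 0 := by
    intro i
    have h1 := hsign i.castSucc
    have h2 := hsign i.succ
    have h3 := halt i
    nlinarith [mul_pos h1 h2]
  have hroot : ∀ i : Fin (d+1), ∃ y, y ∈ Set.Ioo (x i.castSucc) (x i.succ) ∧ r.eval y = 0 := by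
    intro i
    have hlt : x i.castSucc < x i.succ := hmono (Fin.castSucc_lt_succ : i.castSucc < i.succ)
    have hc : ContinuousOn (fun t => r.eval t) (Set.Icc (x i.castSucc) (x i.succ)) :=
      r.continuous.continuousOn
    have h := hralt i
    by_cases hL : r.eval (x i.castSucc) < 0
    · have hR : 0 < r.eval (x i.succ) := by nlinarith
      obtain ⟨y, hy, hy0⟩ := intermediate_value_Ioo hlt.le hc ⟨hL, hR⟩
      exact ⟨y, hy, hy0⟩
    · have hL' : 0 < r.eval (x i.castSucc) := by
        rcases lt_trichotomy (r.eval (x i.castSucc)) 0 with h' | h' | h'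
        · exact absurd h' hL
        · rw [h'] at h; simp at h
        · exact h'
      have hR : r.eval (x i.succ) < 0 := by nlinarith
      obtain ⟨y, hy, hy0⟩ := intermediate_value_Ioo' hlt.le hc ⟨hR, hL'⟩
      exact ⟨y, hy, hy0⟩
  choose y hy hy0 using hroot
  have hymono : StrictMono y := by
    intro i j hij
    calc y i < x i.succ := (hy i).2
    _ ≤ x j.castSucc := hmono.monotone (by
        simp [Fin.le_def]
        omega)
    _ < y j := (hy j).1
  have hr0 : r = 0 := by
    apply Polynomial.eq_zero_of_natDegree_lt_card_of_eval_eq_zero r hymono.injective hy0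
    calc r.natDegree ≤ max q.natDegree p.natDegree := Polynomial.natDegree_sub_le q p
    _ ≤ d := max_le hq hp
    _ < Fintype.card (Fin (d+1)) := by simp
  have hpq : q = p := by
    have := sub_eq_zero.mp hr0
    exact this
  have := hcon (x 0) (hxmem 0)
  rw [hpq] at this
  exact absurd (hbig 0) (not_le.mpr this)
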